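/- Let Δ > 0. Define Q⁺_sup(r) = (2^{−r} + r·ln 2 − 1)/(2^{−Δ} + Δ·ln 2 − 1), Q⁺_min(r) = Q⁺(0, r), and, with X = 2^Δ, r* = log₂( −X·(2·ln(X+1) − ln X − 2·ln 2) / (2X·(ln(X+1) − ln X − ln 2) + X − 1) ). Then for all real i ≤ 0, c ≤ 0 and all r with 0 ≤ r < Δ, |Q⁺(i, r) − Q⁺(c, r)| < Q⁺_sup(r*) − Q⁺_min(r*). -/

import Mathlib

/-- Φ⁺(x) = log₂(1 + 2^x) -/
noncomputable def Phip (x : ℝ) : ℝ := Real.logb 2 (1 + (2:ℝ) ^ x)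

/-- (Φ⁺)'(x) = 2^x / (2^x + 1) -/
noncomputable def dPhip (x : ℝ) : ℝ := (2:ℝ) ^ x / ((2:ℝ) ^ x + 1)

/-- First-order Taylor remainder E⁺(i, r) -/
noncomputable def Ep (i r : ℝ) : ℝ := Phip (i - r) - Phip i + r * dPhip i

/-- Error ratio Q⁺(i, r) = E⁺(i, r)/E⁺(i, Δ) -/
noncomputable def Qp (Δ i r : ℝ) : ℝ := Ep i r / Ep i Δ

/-- Q⁺_sup(r) = (2^{−r} + r·ln 2 − 1)/(2^{−Δ} + Δ·ln 2 − 1) -/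
noncomputable def QpSup (Δ r : ℝ) : ℝ :=
  ((2:ℝ) ^ (-r) + r * Real.log 2 - 1) / ((2:ℝ) ^ (-Δ) + Δ * Real.log 2 - 1)

/-- Q⁺_min(r) = Q⁺(0, r) -/
noncomputable def QpMin (Δ r : ℝ) : ℝ := Qp Δ 0 r

/-- r* for the addition case, with X = 2^Δ -/
noncomputable def rStarP (Δ : ℝ) : ℝ :=
  Real.logb 2
    (-(2:ℝ) ^ Δ * (2 * Real.log ((2:ℝ) ^ Δ + 1) - Real.log ((2:ℝ) ^ Δ) - 2 * Real.log 2) /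
      (2 * (2:ℝ) ^ Δ * (Real.log ((2:ℝ) ^ Δ + 1) - Real.log ((2:ℝ) ^ Δ) - Real.log 2)
        + (2:ℝ) ^ Δ - 1))

open Real Set

lemma two_rpow_pos (x : ℝ) : 0 < (2:ℝ) ^ x := Real.rpow_pos_of_pos two_pos x

lemma hasDerivAt_two_rpow (x : ℝ) :
    HasDerivAt (fun y : ℝ => (2:ℝ) ^ y) ((2:ℝ) ^ x * Real.log 2) x :=
  (Real.hasStrictDerivAt_const_rpow two_pos x).hasDerivAt

lemma hasDerivAt_Phip (x : ℝ) : HasDerivAt Phip (dPhip x) x := by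
  have h1 : (0:ℝ) < 1 + (2:ℝ) ^ x := by positivity
  have h := (((hasDerivAt_two_rpow x).const_add 1).log h1.ne').div_const (Real.log 2)
  have : Phip = fun y => Real.log (1 + (2:ℝ)^y) / Real.log 2 := by
    funext y; rw [Phip, Real.logb]
  rw [this, dPhip]
  refine h.congr_deriv ?_
  have hl2 : Real.log 2 ≠ 0 := (Real.log_pos one_lt_two).ne'
  field_simp
  ring

lemma hasDerivAt_Ep (i r : ℝ) :
    HasDerivAt (fun r => Ep i r) (dPhip i - dPhip (i - r)) r := by
  have h1 : HasDerivAt (fun r : ℝ => i - r) (-1) r := by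
    simpa using (hasDerivAt_id r).const_sub i
  have h2 : HasDerivAt (fun r : ℝ => Phip (i - r)) (dPhip (i - r) * (-1)) r :=
    (hasDerivAt_Phip (i - r)).comp r h1
  have h3 : HasDerivAt (fun r : ℝ => r * dPhip i) (dPhip i) r := by
    simpa using (hasDerivAt_id r).mul_const (dPhip i)
  have : HasDerivAt (fun r => Ep i r) (dPhip (i - r) * (-1) + dPhip i) r :=
    (h2.sub_const (Phip i)).add h3
  convert this using 1
  ring

lemma Ep_zero (i : ℝ) : Ep i 0 = 0 := by simp [Ep]

section Ratio
variable {f g h f' g' : ℝ → ℝ} {b c : ℝ}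

/-- Cauchy MVT between b and c. -/
lemma slope_eq (hf : ∀ x, HasDerivAt f (f' x) x) (hg : ∀ x, HasDerivAt g (g' x) x)
    (hbc : b < c) :
    ∃ ξ ∈ Ioo b c, (g c - g b) * f' ξ = (f c - f b) * g' ξ := by
  have hfc : Continuous f := continuous_iff_continuousAt.2
    fun x => (hf x).differentiableAt.continuousAt
  have hgc : Continuous g := continuous_iff_continuousAt.2
    fun x => (hg x).differentiableAt.continuousAt
  exact exists_ratio_hasDerivAt_eq_ratio_slope f f' hbc hfc.continuousOn
    (fun x _ => hf x) g g' hgc.continuousOn (fun x _ => hg x)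

lemma g_incr (hg : ∀ x, HasDerivAt g (g' x) x)
    (hg'pos : ∀ x, 0 < x → 0 < g' x) (h0b : 0 ≤ b) (hbc : b < c) : g b < g c := by
  obtain ⟨η, hη, hsl⟩ := slope_eq (f := id) (f' := fun _ => (1:ℝ))
    (fun x => hasDerivAt_id x) hg hbc
  simp only [id] at hsl
  have hη0 : 0 < η := lt_of_le_of_lt h0b hη.1
  nlinarith [hg'pos η hη0, hη.1, hη.2, hsl]

lemma fb_eq (hf : ∀ x, HasDerivAt f (f' x) x) (hg : ∀ x, HasDerivAt g (g' x) x)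
    (hfg : ∀ x, 0 < x → x < c → f' x = h x * g' x)
    (hg'pos : ∀ x, 0 < x → 0 < g' x)
    {p q : ℝ} (h0p : 0 ≤ p) (hpq : p < q) (hqc : q ≤ c) :
    ∃ ξ ∈ Ioo p q, f q - f p = (g q - g p) * h ξ := by
  obtain ⟨ξ, hξ, hsl⟩ := slope_eq hf hg hpq
  refine ⟨ξ, hξ, ?_⟩
  have hξ0 : 0 < ξ := lt_of_le_of_lt h0p hξ.1
  have h1 := hfg ξ hξ0 (lt_of_lt_of_le hξ.2 hqc)
  have h2 := (hg'pos ξ hξ0).ne'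
  rw [h1] at hsl
  have := mul_right_cancel₀ h2 (by rw [mul_assoc]; exact hsl :
    ((g q - g p) * h ξ) * g' ξ = (f q - f p) * g' ξ)
  linarith [this]

/-- Monotone rule, strict version. -/
lemma ratio_lt (hf : ∀ x, HasDerivAt f (f' x) x) (hg : ∀ x, HasDerivAt g (g' x) x)
    (hf0 : f 0 = 0) (hg0 : g 0 = 0)
    (hfg : ∀ x, 0 < x → x < c → f' x = h x * g' x)
    (hg'pos : ∀ x, 0 < x → 0 < g' x)
    (hmono : ∀ x y, 0 < x → x < y → y < c → h x < h y)
    (hb : 0 < b) (hbc : b < c) :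
    f b * g c < f c * g b := by
  obtain ⟨ξ₁, hξ₁, he₁⟩ := fb_eq hf hg hfg hg'pos le_rfl hb hbc.le
  rw [hf0, hg0, sub_zero, sub_zero] at he₁
  obtain ⟨ξ₂, hξ₂, he₂⟩ := fb_eq hf hg hfg hg'pos hb.le hbc le_rfl
  have hgb : 0 < g b := by
    have := g_incr hg hg'pos le_rfl hb; rwa [hg0] at this
  have hgcb : 0 < g c - g b := sub_pos.2 (g_incr hg hg'pos hb.le hbc)
  have hh : h ξ₁ < h ξ₂ := hmono ξ₁ ξ₂ hξ₁.1 (hξ₁.2.trans hξ₂.1) hξ₂.2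
  have key : f c * g b - f b * g c = g b * (g c - g b) * (h ξ₂ - h ξ₁) := by
    linear_combination g b * he₂ + (g b - g c) * he₁
  nlinarith [mul_pos (mul_pos hgb hgcb) (sub_pos.2 hh), key]

/-- Monotone rule, antitone non-strict version. -/
lemma ratio_ge (hf : ∀ x, HasDerivAt f (f' x) x) (hg : ∀ x, HasDerivAt g (g' x) x)
    (hf0 : f 0 = 0) (hg0 : g 0 = 0)
    (hfg : ∀ x, 0 < x → x < c → f' x = h x * g' x)
    (hg'pos : ∀ x, 0 < x → 0 < g' x)
    (hmono : ∀ x y, 0 < x → x < y → y < c → h y ≤ h x)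
    (hb : 0 < b) (hbc : b < c) :
    f c * g b ≤ f b * g c := by
  obtain ⟨ξ₁, hξ₁, he₁⟩ := fb_eq hf hg hfg hg'pos le_rfl hb hbc.le
  rw [hf0, hg0, sub_zero, sub_zero] at he₁
  obtain ⟨ξ₂, hξ₂, he₂⟩ := fb_eq hf hg hfg hg'pos hb.le hbc le_rfl
  have hgb : 0 < g b := by
    have := g_incr hg hg'pos le_rfl hb; rwa [hg0] at this
  have hgcb : 0 < g c - g b := sub_pos.2 (g_incr hg hg'pos hb.le hbc)
  have hh : h ξ₂ ≤ h ξ₁ := hmono ξ₁ ξ₂ hξ₁.1 (hξ₁.2.trans hξ₂.1) hξ₂.2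
  have key : f c * g b - f b * g c = g b * (g c - g b) * (h ξ₂ - h ξ₁) := by
    linear_combination g b * he₂ + (g b - g c) * he₁
  nlinarith [mul_nonpos_of_nonneg_of_nonpos (mul_pos hgb hgcb).le (sub_nonpos.2 hh), key]
end Ratio

noncomputable def Fp (r : ℝ) : ℝ := (2:ℝ) ^ (-r) + r * Real.log 2 - 1

lemma log2_pos : (0:ℝ) < Real.log 2 := Real.log_pos one_lt_two

lemma hasDerivAt_Fp (r : ℝ) :
    HasDerivAt Fp (Real.log 2 * (1 - (2:ℝ) ^ (-r))) r := by
  have h1 : HasDerivAt (fun r : ℝ => (2:ℝ) ^ (-r)) ((2:ℝ) ^ (-r) * Real.log 2 * (-1)) r :=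
    (hasDerivAt_two_rpow (-r)).comp r ((hasDerivAt_id r).neg)
  have h2 : HasDerivAt (fun r : ℝ => r * Real.log 2) (Real.log 2) r := by
    simpa using (hasDerivAt_id r).mul_const (Real.log 2)
  have : HasDerivAt Fp ((2:ℝ) ^ (-r) * Real.log 2 * (-1) + Real.log 2) r :=
    (h1.add h2).sub_const (1:ℝ)
  convert this using 1
  ring

lemma rpow_sub_eq (i x : ℝ) : (2:ℝ) ^ (i - x) = (2:ℝ) ^ i * (2:ℝ) ^ (-x) := by
  rw [sub_eq_add_neg, Real.rpow_add two_pos]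

lemma rpow_neg_lt_one {x : ℝ} (hx : 0 < x) : (2:ℝ) ^ (-x) < 1 :=
  Real.rpow_lt_one_of_one_lt_of_neg one_lt_two (by linarith)

lemma rpow_anti {x y : ℝ} (hxy : x < y) : (2:ℝ) ^ (-y) < (2:ℝ) ^ (-x) :=
  Real.rpow_lt_rpow_left_iff one_lt_two |>.2 (by linarith)

/-- Derivative of Ep i in r is positive for r > 0. -/
lemma dEp_pos (i : ℝ) {x : ℝ} (hx : 0 < x) : 0 < dPhip i - dPhip (i - x) := by
  have ha := two_rpow_pos i
  have hs := two_rpow_pos (-x)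
  have hs1 := rpow_neg_lt_one hx
  rw [dPhip, dPhip, rpow_sub_eq]
  set a := (2:ℝ) ^ i
  set s := (2:ℝ) ^ (-x)
  rw [div_sub_div _ _ (by positivity) (by positivity)]
  have hnum : 0 < a * (a * s + 1) - (a + 1) * (a * s) := by nlinarith
  exact div_pos hnum (by positivity)

lemma Ep_pos (i : ℝ) {r : ℝ} (hr : 0 < r) : 0 < Ep i r := by
  have := g_incr (g := fun r => Ep i r) (g' := fun x => dPhip i - dPhip (i - x))
    (hasDerivAt_Ep i) (fun x hx => dEp_pos i hx) le_rfl hr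
  simpa [Ep_zero] using this

/-- (A): for any i, 0 < r < Δ : Ep i r * Fp Δ < Fp r * Ep i Δ. -/
lemma lemA (i : ℝ) {r Δ : ℝ} (hr : 0 < r) (hrΔ : r < Δ) :
    Ep i r * Fp Δ < Ep i Δ * Fp r := by
  have ha := two_rpow_pos i
  have hL := log2_pos
  refine ratio_lt (h := fun x => (2:ℝ)^i / (Real.log 2 * ((2:ℝ)^i + 1) * ((2:ℝ)^i * (2:ℝ)^(-x) + 1)))
    (hasDerivAt_Ep i) hasDerivAt_Fp (Ep_zero i) (by simp [Fp]) ?_ ?_ ?_ hr hrΔ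
  · intro x _ _
    have hs := two_rpow_pos (-x)
    rw [dPhip, dPhip, rpow_sub_eq]
    set a := (2:ℝ) ^ i
    set s := (2:ℝ) ^ (-x)
    field_simp
    ring
  · intro x hx
    have := rpow_neg_lt_one hx
    nlinarith
  · intro x y hx hxy _
    have hsx := two_rpow_pos (-x)
    have hsy := two_rpow_pos (-y)
    have hss : (2:ℝ)^(-y) < (2:ℝ)^(-x) := rpow_anti hxy
    apply div_lt_div_of_pos_left ha
    · positivity
    · nlinarith [mul_pos (mul_pos hL (by linarith : (0:ℝ) < (2:ℝ)^i+1))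
        (mul_pos ha (sub_pos.2 hss))]

/-- (B): for i ≤ 0, 0 < r < Δ : Ep i Δ * Ep 0 r ≤ Ep i r * Ep 0 Δ. -/
lemma lemB {i : ℝ} (hi : i ≤ 0) {r Δ : ℝ} (hr : 0 < r) (hrΔ : r < Δ) :
    Ep i Δ * Ep 0 r ≤ Ep i r * Ep 0 Δ := by
  have ha := two_rpow_pos i
  have ha1 : (2:ℝ) ^ i ≤ 1 := Real.rpow_le_one_of_one_le_of_nonpos one_le_two hi
  refine ratio_ge
    (h := fun x => 2 * (2:ℝ)^i * ((2:ℝ)^(-x) + 1) / (((2:ℝ)^i + 1) * ((2:ℝ)^i * (2:ℝ)^(-x) + 1)))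
    (hasDerivAt_Ep i) (hasDerivAt_Ep 0) (Ep_zero i) (Ep_zero 0) ?_ ?_ ?_ hr hrΔ
  · intro x _ _
    have hs := two_rpow_pos (-x)
    rw [dPhip, dPhip, dPhip, dPhip, rpow_sub_eq, rpow_sub_eq, Real.rpow_zero]
    set a := (2:ℝ) ^ i
    set s := (2:ℝ) ^ (-x)
    field_simp
    ring
  · intro x hx
    exact dEp_pos 0 hx
  · intro x y hx hxy _
    have hsx := two_rpow_pos (-x)
    have hsy := two_rpow_pos (-y)
    have hss : (2:ℝ)^(-y) < (2:ℝ)^(-x) := rpow_anti hxy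
    rw [div_le_div_iff₀ (by positivity) (by positivity)]
    have key : 0 ≤ 2 * (2:ℝ)^i * ((2:ℝ)^i + 1) * ((1 - (2:ℝ)^i) * ((2:ℝ)^(-x) - (2:ℝ)^(-y))) :=
      mul_nonneg (by positivity) (mul_nonneg (by linarith) (by linarith))
    nlinarith [key]

lemma hasDerivAt_log1p {x : ℝ} (hx : 0 < x) :
    HasDerivAt (fun y : ℝ => Real.log (1 + y)) (1/(1+x)) x := by
  have h := (Real.hasDerivAt_log (by positivity : (1:ℝ)+x ≠ 0)).comp x
    ((hasDerivAt_id x).const_add 1)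
  exact h.congr_deriv (by simp)

lemma phi_hasDeriv {x : ℝ} (hx : 0 < x) :
    HasDerivAt (fun y : ℝ => 4*Real.log (1+y) - Real.log y - y + 1 - 4*Real.log 2)
      (4/(1+x) - 1/x - 1) x := by
  have h1 := (hasDerivAt_log1p hx).const_mul 4
  have h2 := Real.hasDerivAt_log hx.ne'
  have := (((h1.sub h2).sub (hasDerivAt_id x)).add_const 1).sub_const (4*Real.log 2)
  refine this.congr_deriv ?_
  field_simp

lemma phi_pos {t : ℝ} (h0 : 0 < t) (h1 : t < 1) :
    0 < 4*Real.log (1+t) - Real.log t - t + 1 - 4*Real.log 2 := by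
  set φ : ℝ → ℝ := fun y => 4*Real.log (1+y) - Real.log y - y + 1 - 4*Real.log 2 with hφ
  have hanti : StrictAntiOn φ (Icc t 1) := by
    apply strictAntiOn_of_deriv_neg (convex_Icc t 1)
    · exact fun x hx => ((phi_hasDeriv (lt_of_lt_of_le h0 hx.1)).continuousAt).continuousWithinAt
    · intro x hx
      rw [interior_Icc] at hx
      have hx0 : 0 < x := h0.trans hx.1
      rw [(phi_hasDeriv hx0).deriv]
      have key : 4/(1+x) - 1/x - 1 = -((x-1)^2)/(x*(1+x)) := by field_simp; ring
      rw [key]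
      apply div_neg_of_neg_of_pos _ (by positivity)
      nlinarith [hx.2]
  have := hanti (left_mem_Icc.2 h1.le) (right_mem_Icc.2 h1.le) h1
  have hφ1 : φ 1 = 0 := by
    simp only [hφ]
    rw [show (1:ℝ)+1 = 2 by norm_num, Real.log_one]
    ring
  rw [hφ1] at this
  exact this

lemma psi_hasDeriv {x : ℝ} (hx : 0 < x) :
    HasDerivAt (fun y : ℝ => y - Real.log y - 1 - (1+y)*(2*Real.log (1+y) - 2*Real.log 2 - Real.log y))
      (Real.log x + 2*Real.log 2 - 2*Real.log (1+x)) x := by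
  have h2 := Real.hasDerivAt_log hx.ne'
  have hin : HasDerivAt (fun y : ℝ => 2*Real.log (1+y) - 2*Real.log 2 - Real.log y)
      (2*(1/(1+x)) - x⁻¹) x := by
    have := ((hasDerivAt_log1p hx).const_mul 2).sub_const (2*Real.log 2)
    exact this.sub h2
  have hprod := ((hasDerivAt_id x).const_add 1).mul hin
  have := (((hasDerivAt_id x).sub h2).sub_const 1).sub hprod
  refine this.congr_deriv ?_
  simp only [id]
  field_simp
  ring

lemma psi_pos {t : ℝ} (h0 : 0 < t) (h1 : t < 1) :
    0 < t - Real.log t - 1 - (1+t)*(2*Real.log (1+t) - 2*Real.log 2 - Real.log t) := by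
  set ψ : ℝ → ℝ := fun y => y - Real.log y - 1 - (1+y)*(2*Real.log (1+y) - 2*Real.log 2 - Real.log y) with hψ
  have hanti : StrictAntiOn ψ (Icc t 1) := by
    apply strictAntiOn_of_deriv_neg (convex_Icc t 1)
    · exact fun x hx => ((psi_hasDeriv (lt_of_lt_of_le h0 hx.1)).continuousAt).continuousWithinAt
    · intro x hx
      rw [interior_Icc] at hx
      have hx0 : 0 < x := h0.trans hx.1
      rw [(psi_hasDeriv hx0).deriv]
      have e1 : Real.log x + 2*Real.log 2 = Real.log (4*x) := by
        rw [Real.log_mul (by norm_num) hx0.ne', show (4:ℝ) = 2^2 by norm_num, Real.log_pow]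
        push_cast; ring
      have e2 : 2*Real.log (1+x) = Real.log ((1+x)^2) := by
        rw [Real.log_pow]; push_cast; ring
      rw [e1, e2, sub_neg]
      apply Real.log_lt_log (by positivity)
      nlinarith [hx.2]
  have := hanti (left_mem_Icc.2 h1.le) (right_mem_Icc.2 h1.le) h1
  have hψ1 : ψ 1 = 0 := by
    simp only [hψ]
    rw [show (1:ℝ)+1 = 2 by norm_num, Real.log_one]
    ring
  rw [hψ1] at this
  exact this
section DeltaFacts
variable {Δ : ℝ} (hΔ : 0 < Δ)

lemma LG_eq :
    Real.log 2 * Ep 0 Δ = Real.log (1 + (2:ℝ)^(-Δ)) - Real.log 2 + Δ * Real.log 2 / 2 := by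
  have hl2 : Real.log 2 ≠ 0 := log2_pos.ne'
  simp only [Ep, Phip, dPhip, zero_sub, Real.rpow_zero, Real.logb]
  rw [show (1:ℝ)+1 = 2 by norm_num]
  field_simp

include hΔ in
lemma FpD_pos : 0 < Fp Δ := by
  have he : (2:ℝ)^(-Δ) = Real.exp (Real.log 2 * (-Δ)) := Real.rpow_def_of_pos two_pos (-Δ)
  have hx : Real.log 2 * (-Δ) ≠ 0 := (mul_neg_of_pos_of_neg log2_pos (by linarith)).ne
  have h := Real.add_one_lt_exp hx
  rw [← he] at h
  have : Fp Δ = (2:ℝ)^(-Δ) + Δ * Real.log 2 - 1 := rfl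
  nlinarith [h]

lemma hlogt : Real.log ((2:ℝ)^(-Δ)) = -Δ * Real.log 2 := by
  rw [Real.log_rpow two_pos]

include hΔ in
lemma P2D : Fp Δ < 4*(Real.log 2 * Ep 0 Δ) := by
  have h := phi_pos (two_rpow_pos (-Δ)) (rpow_neg_lt_one hΔ)
  have hFp : Fp Δ = (2:ℝ)^(-Δ) + Δ * Real.log 2 - 1 := rfl
  have h2 := LG_eq (Δ := Δ)
  have h3 := hlogt (Δ := Δ)
  linarith

include hΔ in
lemma P1D : 2*(Real.log 2 * Ep 0 Δ)*(1+(2:ℝ)^(-Δ)) < Fp Δ := by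
  have h := psi_pos (two_rpow_pos (-Δ)) (rpow_neg_lt_one hΔ)
  have hFp : Fp Δ = (2:ℝ)^(-Δ) + Δ * Real.log 2 - 1 := rfl
  have h3 := hlogt (Δ := Δ)
  have hX : 2*(Real.log 2 * Ep 0 Δ)
      = 2*Real.log (1+(2:ℝ)^(-Δ)) - 2*Real.log 2 - Real.log ((2:ℝ)^(-Δ)) := by
    have h2 := LG_eq (Δ := Δ); linarith
  rw [hX]
  nlinarith [h]

end DeltaFacts

lemma rstar_facts {Δ : ℝ} (hΔ : 0 < Δ) :
    0 < rStarP Δ ∧ rStarP Δ < Δ ∧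
      Fp Δ = 2*(Real.log 2 * Ep 0 Δ)*(1 + (2:ℝ)^(-(rStarP Δ))) := by
  set L := Real.log 2 with hL
  set G := Ep 0 Δ with hG
  set A := 2*(L*G) with hA
  set B := Fp Δ - A with hB
  have hGpos : 0 < G := Ep_pos 0 hΔ
  have hApos : 0 < A := by have := log2_pos; rw [hA]; positivity
  have ht0 : (0:ℝ) < (2:ℝ)^(-Δ) := two_rpow_pos (-Δ)
  have ht1 : (2:ℝ)^(-Δ) < 1 := rpow_neg_lt_one hΔ
  have hP1 : A*(1+(2:ℝ)^(-Δ)) < Fp Δ := P1D hΔ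
  have hP2 : Fp Δ < 2*A := by have := P2D hΔ; rw [hA]; linarith
  have hBpos : 0 < B := by rw [hB]; nlinarith
  have hBA : B < A := by rw [hB]; linarith
  -- the argument of logb in rStarP equals A / B
  have hrw : rStarP Δ = Real.logb 2 (A/B) := by
    rw [rStarP]
    congr 1
    have hXpos : (0:ℝ) < (2:ℝ)^Δ := two_rpow_pos Δ
    have hXt : (2:ℝ)^Δ * (2:ℝ)^(-Δ) = 1 := by
      rw [← Real.rpow_add two_pos]; simp
    have hlogX : Real.log ((2:ℝ)^Δ) = Δ * L := Real.log_rpow two_pos Δ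
    have hX1 : (2:ℝ)^Δ + 1 = (2:ℝ)^Δ * (1 + (2:ℝ)^(-Δ)) := by
      have : (2:ℝ)^Δ * (1 + (2:ℝ)^(-Δ)) = (2:ℝ)^Δ + (2:ℝ)^Δ * (2:ℝ)^(-Δ) := by ring
      rw [this, hXt]
    have hlogX1 : Real.log ((2:ℝ)^Δ + 1) = Real.log (1 + (2:ℝ)^(-Δ)) + Δ * L := by
      rw [hX1, Real.log_mul hXpos.ne' (by positivity), hlogX]
      ring
    have hLG : L * G = Real.log (1 + (2:ℝ)^(-Δ)) - L + Δ * L / 2 := LG_eq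
    have hFp : Fp Δ = (2:ℝ)^(-Δ) + Δ * L - 1 := rfl
    have hN : -(2:ℝ)^Δ * (2 * Real.log ((2:ℝ)^Δ + 1) - Real.log ((2:ℝ)^Δ) - 2*L)
        = -(2:ℝ)^Δ * A := by
      rw [hA]
      congr 1
      rw [hlogX1, hlogX, hLG]
      ring
    have hD : 2 * (2:ℝ)^Δ * (Real.log ((2:ℝ)^Δ + 1) - Real.log ((2:ℝ)^Δ) - L)
        + (2:ℝ)^Δ - 1 = -(2:ℝ)^Δ * B := by
      rw [hB, hA, hFp, hlogX1, hlogX, hLG]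
      linear_combination hXt
    rw [hN, hD, mul_div_mul_left _ _ (neg_ne_zero.2 hXpos.ne')]
  have h2r : (2:ℝ)^(rStarP Δ) = A/B := by
    rw [hrw]
    exact Real.rpow_logb two_pos (by norm_num) (div_pos hApos hBpos)
  have h2nr : (2:ℝ)^(-(rStarP Δ)) = B/A := by
    rw [Real.rpow_neg (by norm_num : (0:ℝ) ≤ 2), h2r, inv_div]
  refine ⟨?_, ?_, ?_⟩
  · have hlt : (2:ℝ)^(-(rStarP Δ)) < (2:ℝ)^(0:ℝ) := by
      rw [Real.rpow_zero, h2nr]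
      exact (div_lt_one hApos).2 hBA
    have := (Real.rpow_lt_rpow_left_iff one_lt_two).1 hlt
    linarith
  · have hlt : (2:ℝ)^(-Δ) < (2:ℝ)^(-(rStarP Δ)) := by
      rw [h2nr, lt_div_iff₀ hApos, hB]
      nlinarith
    have := (Real.rpow_lt_rpow_left_iff one_lt_two).1 hlt
    linarith
  · rw [h2nr]
    have hAB : A*(1+B/A) = A + B := by field_simp
    rw [hAB, hB]
    ring
theorem stmt_9 (Δ : ℝ) (hΔ : 0 < Δ) :
    ∀ i c r : ℝ, i ≤ 0 → c ≤ 0 → 0 ≤ r → r < Δ →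
      |Qp Δ i r - Qp Δ c r| < QpSup Δ (rStarP Δ) - QpMin Δ (rStarP Δ) := by
  intro i c r hi hc hr0 hrΔ
  obtain ⟨hrs0, hrsΔ, hFrel⟩ := rstar_facts hΔ
  have hGpos : 0 < Ep 0 Δ := Ep_pos 0 hΔ
  have hFpos : 0 < Fp Δ := FpD_pos hΔ
  have hLGpos : 0 < Real.log 2 * Ep 0 Δ := mul_pos log2_pos hGpos
  have hQpSup : ∀ x : ℝ, QpSup Δ x = Fp x / Fp Δ := fun x => rfl
  have hQpMin : ∀ x : ℝ, QpMin Δ x = Ep 0 x / Ep 0 Δ := fun x => rfl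
  have hQp : ∀ j x : ℝ, Qp Δ j x = Ep j x / Ep j Δ := fun j x => rfl
  have bound1 : ∀ j r' : ℝ, 0 < r' → r' < Δ → Qp Δ j r' < QpSup Δ r' := by
    intro j r' h1 h2
    rw [hQp, hQpSup, div_lt_div_iff₀ (Ep_pos j hΔ) hFpos]
    have := lemA j h1 h2
    linarith
  have bound2 : ∀ j r' : ℝ, j ≤ 0 → 0 < r' → r' < Δ → QpMin Δ r' ≤ Qp Δ j r' := by
    intro j r' hj h1 h2
    rw [hQp, hQpMin, div_le_div_iff₀ hGpos (Ep_pos j hΔ)]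
    have := lemB hj h1 h2
    linarith
  have hRHSpos : 0 < QpSup Δ (rStarP Δ) - QpMin Δ (rStarP Δ) := by
    have h := bound1 0 (rStarP Δ) hrs0 hrsΔ
    have h0 : QpMin Δ (rStarP Δ) = Qp Δ 0 (rStarP Δ) := rfl
    linarith
  rcases eq_or_lt_of_le hr0 with h0 | hrpos
  · have hq0 : ∀ j : ℝ, Qp Δ j 0 = 0 := by
      intro j; rw [hQp, Ep_zero, zero_div]
    rw [← h0, hq0, hq0, sub_zero, abs_zero]
    exact hRHSpos
  · have h1 : |Qp Δ i r - Qp Δ c r| < QpSup Δ r - QpMin Δ r := by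
      rw [abs_sub_lt_iff]
      constructor
      · have hb1 := bound1 i r hrpos hrΔ
        have hb2 := bound2 c r hc hrpos hrΔ
        linarith
      · have hb1 := bound1 c r hrpos hrΔ
        have hb2 := bound2 i r hi hrpos hrΔ
        linarith
    have h2 : QpSup Δ r - QpMin Δ r ≤ QpSup Δ (rStarP Δ) - QpMin Δ (rStarP Δ) := by
      set D : ℝ → ℝ := fun x => Fp x / Fp Δ - Ep 0 x / Ep 0 Δ with hDdef
      have hDder : ∀ x : ℝ, HasDerivAt D (Real.log 2 * (1 - (2:ℝ)^(-x)) / Fp Δ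
          - (dPhip 0 - dPhip (0 - x)) / Ep 0 Δ) x := fun x =>
        ((hasDerivAt_Fp x).div_const _).sub ((hasDerivAt_Ep 0 x).div_const _)
      have hds : ∀ x : ℝ, dPhip 0 - dPhip (0 - x)
          = (1 - (2:ℝ)^(-x))/(2*((2:ℝ)^(-x)+1)) := by
        intro x
        rw [dPhip, dPhip, zero_sub, Real.rpow_zero]
        have := two_rpow_pos (-x)
        field_simp
        ring
      have hmono : MonotoneOn D (Icc 0 (rStarP Δ)) := by
        apply monotoneOn_of_deriv_nonneg (convex_Icc _ _)
        · exact fun x _ => ((hDder x).continuousAt).continuousWithinAt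
        · intro x hx
          exact ((hDder x).differentiableAt).differentiableWithinAt
        · intro x hx
          rw [interior_Icc] at hx
          rw [(hDder x).deriv, hds x]
          have hx0 := hx.1
          have hs1 : (2:ℝ)^(-x) < 1 := rpow_neg_lt_one hx0
          have hσs : (2:ℝ)^(-(rStarP Δ)) ≤ (2:ℝ)^(-x) :=
            (Real.rpow_le_rpow_left_iff one_lt_two).2 (by linarith [hx.2])
          have hspos : 0 < (2:ℝ)^(-x) := two_rpow_pos _
          have hσpos : 0 < (2:ℝ)^(-(rStarP Δ)) := two_rpow_pos _
          rw [sub_nonneg, div_div, div_le_div_iff₀ (by positivity) hFpos, hFrel]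
          nlinarith [mul_nonneg (mul_nonneg hLGpos.le
            (by linarith : (0:ℝ) ≤ 1 - (2:ℝ)^(-x)))
            (by linarith : (0:ℝ) ≤ (2:ℝ)^(-x) - (2:ℝ)^(-(rStarP Δ)))]
      have hanti : AntitoneOn D (Icc (rStarP Δ) Δ) := by
        apply antitoneOn_of_deriv_nonpos (convex_Icc _ _)
        · exact fun x _ => ((hDder x).continuousAt).continuousWithinAt
        · intro x hx
          exact ((hDder x).differentiableAt).differentiableWithinAt
        · intro x hx
          rw [interior_Icc] at hx
          rw [(hDder x).deriv, hds x]
          have hx0 : 0 < x := hrs0.trans hx.1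
          have hs1 : (2:ℝ)^(-x) < 1 := rpow_neg_lt_one hx0
          have hσs : (2:ℝ)^(-x) ≤ (2:ℝ)^(-(rStarP Δ)) :=
            (Real.rpow_le_rpow_left_iff one_lt_two).2 (by linarith [hx.1])
          have hspos : 0 < (2:ℝ)^(-x) := two_rpow_pos _
          have hσpos : 0 < (2:ℝ)^(-(rStarP Δ)) := two_rpow_pos _
          rw [sub_nonpos, div_div, div_le_div_iff₀ hFpos (by positivity), hFrel]
          nlinarith [mul_nonneg (mul_nonneg hLGpos.le
            (by linarith : (0:ℝ) ≤ 1 - (2:ℝ)^(-x)))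
            (by linarith : (0:ℝ) ≤ (2:ℝ)^(-(rStarP Δ)) - (2:ℝ)^(-x))]
      have eD : ∀ x : ℝ, QpSup Δ x - QpMin Δ x = D x := fun x => rfl
      rw [eD, eD]
      by_cases hcase : r ≤ rStarP Δ
      · exact hmono ⟨hrpos.le, hcase⟩ ⟨hrs0.le, le_rfl⟩ hcase
      · push_neg at hcase
        exact hanti ⟨le_rfl, hrsΔ.le⟩ ⟨hcase.le, hrΔ.le⟩ hcase.le
    linarith
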